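/- Let f : [a,b] → ℝ be continuous and integrable on [a,b] with 0 ≤ a < b, let l ≥ 1, and suppose |f|^l is (α,m)-convex for some fixed (α,m) ∈ (0,1]². Then for any fixed p, q > 0, ∫_a^b (x-a)^p (b-x)^q f(x) dx ≤ (b-a)^{p+q+1} [β(p+1, q+1)]^{(l-1)/l} [β(q+1, p+α+1)|f(b)|^l + m(β(q+1, p+1) − β(q+1, p+α+1))|f(a/m)|^l]^{1/l}. -/

import Mathlib

open Real Set MeasureTheory intervalIntegral

noncomputable def beta (x y : ℝ) : ℝ := ∫ t in (0:ℝ)..1, t ^ (x-1) * (1-t) ^ (y-1)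

def AMConvexOn (s : Set ℝ) (α m : ℝ) (g : ℝ → ℝ) : Prop :=
  ∀ x ∈ s, ∀ y ∈ s, ∀ t ∈ Set.Icc (0:ℝ) 1, g (t*x + m*(1-t)*y) ≤ t ^ α * g x + m*(1 - t ^ α) * g y



lemma beta_symm (x y : ℝ) : beta x y = beta y x := by
  unfold beta
  have := intervalIntegral.integral_comp_sub_left
    (fun t : ℝ => t ^ (x-1) * (1-t) ^ (y-1)) 1 (a := 0) (b := 1)
  simp only [sub_zero, sub_self] at this
  rw [← this]
  apply intervalIntegral.integral_congr
  intro t _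
  simp only
  rw [sub_sub_cancel]
  ring

lemma cont_w {r s : ℝ} (hr : 0 ≤ r) (hs : 0 ≤ s) :
    Continuous (fun t : ℝ => t ^ r * (1-t) ^ s) := by
  exact (Real.continuous_rpow_const hr).mul
    ((Real.continuous_rpow_const hs).comp (continuous_const.sub continuous_id))

lemma int_w {r s : ℝ} (hr : 0 ≤ r) (hs : 0 ≤ s) :
    IntervalIntegrable (fun t : ℝ => t ^ r * (1-t) ^ s) volume 0 1 :=
  (cont_w hr hs).intervalIntegrable 0 1

lemma w_nonneg {r s t : ℝ} (ht : t ∈ Set.Icc (0:ℝ) 1) : 0 ≤ t ^ r * (1-t) ^ s :=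
  mul_nonneg (Real.rpow_nonneg ht.1 r) (Real.rpow_nonneg (by linarith [ht.2]) s)

lemma beta_nonneg {x y : ℝ} (hx : 1 ≤ x) (hy : 1 ≤ y) : 0 ≤ beta x y := by
  apply intervalIntegral.integral_nonneg zero_le_one
  intro t ht; exact w_nonneg ht

-- scaling: ∫ x in a..b, w(x) h(x) = (b-a)^(p+q+1) ∫ t in 0..1, t^p (1-t)^q h((b-a)t+a)
lemma scale_int {a b p q : ℝ} (hab : a < b) (hp : 0 < p) (hq : 0 < q) (h : ℝ → ℝ) :
    ∫ x in a..b, (x-a)^p * (b-x)^q * h x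
      = (b-a)^(p+q+1) * ∫ t in (0:ℝ)..1, t^p * (1-t)^q * h ((b-a)*t + a) := by
  have hba : (0:ℝ) < b - a := by linarith
  have key := intervalIntegral.smul_integral_comp_mul_add
    (fun x => (x-a)^p * (b-x)^q * h x) (b-a) a (a := 0) (b := 1)
  simp only [mul_zero, zero_add, mul_one, smul_eq_mul] at key
  have hend : b - a + a = b := by ring
  rw [hend] at key
  rw [← key]
  have congrEq : ∀ t ∈ Set.uIcc (0:ℝ) 1,
      ((b-a)*t + a - a)^p * (b - ((b-a)*t + a))^q * h ((b-a)*t + a)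
        = ((b-a)^p * (b-a)^q) * (t^p * (1-t)^q * h ((b-a)*t + a)) := by
    intro t ht
    rw [Set.uIcc_of_le zero_le_one] at ht
    have h1 : (b-a)*t + a - a = (b-a)*t := by ring
    have h2 : b - ((b-a)*t + a) = (b-a)*(1-t) := by ring
    rw [h1, h2, Real.mul_rpow hba.le ht.1, Real.mul_rpow hba.le (by linarith [ht.2])]
    ring
  rw [intervalIntegral.integral_congr congrEq, intervalIntegral.integral_const_mul]
  rw [show (b-a)^(p+q+1) = (b-a) * ((b-a)^p * (b-a)^q) by
    rw [Real.rpow_add' hba.le (by positivity), Real.rpow_add' hba.le (by positivity),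
      Real.rpow_one]; ring]
  ring

lemma holder_interval {a b l : ℝ} (hab : a < b) (hl : 1 < l) {w g : ℝ → ℝ}
    (hw : Continuous w) (hwpos : ∀ x ∈ Set.Icc a b, 0 ≤ w x)
    (hg : ContinuousOn g (Set.Icc a b)) (hgpos : ∀ x, 0 ≤ g x) :
    ∫ x in a..b, w x * g x
      ≤ (∫ x in a..b, w x)^((l-1)/l) * (∫ x in a..b, w x * (g x)^l)^(1/l) := by
  have hl0 : (0:ℝ) < l := by linarith
  have hl1 : l - 1 ≠ 0 := by intro h; apply absurd hl; linarith [sub_eq_zero.mp h]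
  have hsum : (l-1)/l + 1/l = 1 := by field_simp; ring
  set r : ℝ := l / (l - 1) with hr
  have hpq : r.HolderConjugate l := by
    rw [Real.holderConjugate_iff]
    constructor
    · rw [hr]; rw [lt_div_iff₀ (by linarith)]; linarith
    · rw [hr]; field_simp; ring
  set μ : Measure ℝ := volume.restrict (Set.Ioc a b) with hμ
  haveI : IsFiniteMeasure μ := by
    constructor
    rw [hμ, Measure.restrict_apply_univ, Real.volume_Ioc]
    exact ENNReal.ofReal_lt_top
  set F : ℝ → ℝ := fun x => (w x) ^ ((l-1)/l) with hF
  set G : ℝ → ℝ := fun x => (w x) ^ (1/l) * g x with hG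
  have hFcont : Continuous F :=
    (Real.continuous_rpow_const (div_nonneg (by linarith) hl0.le)).comp hw
  have hGcont : ContinuousOn G (Set.Icc a b) :=
    (((Real.continuous_rpow_const (by positivity)).comp hw).continuousOn).mul hg
  have hsub : Set.Ioc a b ⊆ Set.Icc a b := Set.Ioc_subset_Icc_self
  have memF : MemLp F (ENNReal.ofReal r) μ := by
    obtain ⟨C, hC⟩ := (isCompact_Icc (a := a) (b := b)).exists_bound_of_continuousOn
      hFcont.continuousOn
    exact MemLp.of_bound (hFcont.aestronglyMeasurable.restrict) C
      (ae_restrict_of_forall_mem measurableSet_Ioc (fun x hx => hC x (hsub hx)))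
  have memG : MemLp G (ENNReal.ofReal l) μ := by
    obtain ⟨C, hC⟩ := (isCompact_Icc (a := a) (b := b)).exists_bound_of_continuousOn hGcont
    exact MemLp.of_bound ((hGcont.mono hsub).aestronglyMeasurable measurableSet_Ioc) C
      (ae_restrict_of_forall_mem measurableSet_Ioc (fun x hx => hC x (hsub hx)))
  have hFnn : 0 ≤ᵐ[μ] F :=
    ae_restrict_of_forall_mem measurableSet_Ioc
      (fun x hx => Real.rpow_nonneg (hwpos x (hsub hx)) _)
  have hGnn : 0 ≤ᵐ[μ] G :=
    ae_restrict_of_forall_mem measurableSet_Ioc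
      (fun x hx => mul_nonneg (Real.rpow_nonneg (hwpos x (hsub hx)) _) (hgpos x))
  have key := MeasureTheory.integral_mul_le_Lp_mul_Lq_of_nonneg hpq hFnn hGnn memF memG
  have e1 : ∫ x, F x * G x ∂μ = ∫ x in a..b, w x * g x := by
    rw [intervalIntegral.integral_of_le hab.le]
    apply setIntegral_congr_fun measurableSet_Ioc
    intro x hx
    have hwx := hwpos x (hsub hx)
    simp only [hF, hG]
    rw [← mul_assoc, ← Real.rpow_add' hwx (by rw [hsum]; norm_num), hsum, Real.rpow_one]
  have e2 : ∫ x, F x ^ r ∂μ = ∫ x in a..b, w x := by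
    rw [intervalIntegral.integral_of_le hab.le]
    apply setIntegral_congr_fun measurableSet_Ioc
    intro x hx
    have hwx := hwpos x (hsub hx)
    simp only [hF]
    rw [← Real.rpow_mul hwx, show (l-1)/l * r = 1 by rw [hr]; field_simp, Real.rpow_one]
  have e3 : ∫ x, G x ^ l ∂μ = ∫ x in a..b, w x * (g x)^l := by
    rw [intervalIntegral.integral_of_le hab.le]
    apply setIntegral_congr_fun measurableSet_Ioc
    intro x hx
    have hwx := hwpos x (hsub hx)
    simp only [hG]
    rw [Real.mul_rpow (Real.rpow_nonneg hwx _) (hgpos x), ← Real.rpow_mul hwx,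
      show 1/l * l = 1 by field_simp, Real.rpow_one]
  have hrinv : 1/r = (l-1)/l := by rw [hr, one_div_div]
  rw [e1, e2, e3, hrinv] at key
  exact key

lemma beta_eval (p q : ℝ) : beta (p+1) (q+1) = ∫ t in (0:ℝ)..1, t^p * (1-t)^q := by
  unfold beta; norm_num

theorem stmt10 (a b p q : ℝ) (f : ℝ → ℝ)
    (ha : 0 ≤ a) (hab : a < b) (hp : 0 < p) (hq : 0 < q)
    (hcont : ContinuousOn f (Set.Icc a b))
    (hint : IntervalIntegrable f volume a b)
    (l : ℝ) (hl : 1 ≤ l)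
    (α m : ℝ) (hα : α ∈ Set.Ioc (0:ℝ) 1) (hm : m ∈ Set.Ioc (0:ℝ) 1)
    (hf : AMConvexOn (Set.Icc 0 (max b (a/m))) α m (fun x => |f x| ^ l)) :
    ∫ x in a..b, (x-a)^p * (b-x)^q * f x
      ≤ (b-a)^(p+q+1) * (beta (p+1) (q+1))^((l-1)/l)
          * (beta (q+1) (p+α+1) * |f b| ^ l
              + m * (beta (q+1) (p+1) - beta (q+1) (p+α+1)) * |f (a/m)| ^ l) ^ (1/l) := by
  have hl0 : (0:ℝ) < l := by linarith
  have hba : (0:ℝ) < b - a := by linarith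
  have hm0 : m ≠ 0 := ne_of_gt hm.1
  have hIab : Set.uIcc a b = Set.Icc a b := Set.uIcc_of_le hab.le
  have hI01 : Set.uIcc (0:ℝ) 1 = Set.Icc 0 1 := Set.uIcc_of_le zero_le_one
  set X : ℝ := (b-a)^(p+q+1) with hX
  have hX0 : 0 ≤ X := Real.rpow_nonneg hba.le _
  set W : ℝ → ℝ := fun x => (x-a)^p * (b-x)^q with hW
  have hWc : Continuous W := by
    exact ((Real.continuous_rpow_const hp.le).comp (continuous_id.sub continuous_const)).mul
      ((Real.continuous_rpow_const hq.le).comp (continuous_const.sub continuous_id))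
  have hWnn : ∀ x ∈ Set.Icc a b, 0 ≤ W x := fun x hx =>
    mul_nonneg (Real.rpow_nonneg (by linarith [hx.1]) _) (Real.rpow_nonneg (by linarith [hx.2]) _)
  have habs : ContinuousOn (fun x => |f x|) (Set.Icc a b) := hcont.abs
  have habsl : ContinuousOn (fun x => |f x| ^ l) (Set.Icc a b) :=
    (Real.continuous_rpow_const hl0.le).comp_continuousOn habs
  -- φ
  set φ : ℝ → ℝ := fun t => (b-a)*t + a with hφ
  have hφc : Continuous φ := by continuity
  have hφmaps : Set.MapsTo φ (Set.Icc 0 1) (Set.Icc a b) := by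
    intro t ht
    simp only [hφ, Set.mem_Icc]
    constructor
    · nlinarith [mul_nonneg hba.le ht.1]
    · nlinarith [mul_le_of_le_one_right hba.le ht.2]
  -- basic integrabilities
  have hWf : IntervalIntegrable (fun x => W x * f x) volume a b :=
    ((hWc.continuousOn).mul hcont).intervalIntegrable_of_Icc hab.le
  have hWabs : IntervalIntegrable (fun x => W x * |f x|) volume a b :=
    ((hWc.continuousOn).mul habs).intervalIntegrable_of_Icc hab.le
  -- step A
  have stepA : ∫ x in a..b, W x * f x ≤ ∫ x in a..b, W x * |f x| := by
    apply intervalIntegral.integral_mono_on hab.le hWf hWabs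
    intro x hx
    exact mul_le_mul_of_nonneg_left (le_abs_self _) (hWnn x hx)
  -- scale identities
  have hA : ∫ x in a..b, W x = X * beta (p+1) (q+1) := by
    have := scale_int hab hp hq (fun _ => (1:ℝ))
    simp only [mul_one] at this
    rw [beta_eval, hX]
    exact this
  set K : ℝ := ∫ t in (0:ℝ)..1, t^p * (1-t)^q * |f (φ t)| ^ l with hK
  have hJ : ∫ x in a..b, W x * |f x| ^ l = X * K := scale_int hab hp hq (fun x => |f x| ^ l)
  -- bound K
  set B₁ : ℝ := |f b| ^ l with hB₁
  set B₂ : ℝ := |f (a/m)| ^ l with hB₂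
  have hB₁0 : 0 ≤ B₁ := Real.rpow_nonneg (abs_nonneg _) _
  have hB₂0 : 0 ≤ B₂ := Real.rpow_nonneg (abs_nonneg _) _
  set D : ℝ := beta (p+α+1) (q+1) * B₁ + m * (beta (p+1) (q+1) - beta (p+α+1) (q+1)) * B₂
    with hD
  have hKc : ContinuousOn (fun t => t^p * (1-t)^q * |f (φ t)| ^ l) (Set.Icc 0 1) :=
    (cont_w hp.le hq.le).continuousOn.mul (habsl.comp hφc.continuousOn hφmaps)
  have hRc : Continuous (fun t : ℝ => t^p * (1-t)^q * (t^α * B₁ + m * (1 - t^α) * B₂)) := by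
    exact (cont_w hp.le hq.le).mul
      (((Real.continuous_rpow_const hα.1.le).mul continuous_const).add
        ((continuous_const.mul (continuous_const.sub (Real.continuous_rpow_const hα.1.le))).mul
          continuous_const))
  have hKle : K ≤ ∫ t in (0:ℝ)..1, t^p * (1-t)^q * (t^α * B₁ + m * (1 - t^α) * B₂) := by
    apply intervalIntegral.integral_mono_on zero_le_one
      (hKc.intervalIntegrable_of_Icc zero_le_one)
      (hRc.continuousOn.intervalIntegrable_of_Icc zero_le_one)
    intro t ht
    have hb0 : b ∈ Set.Icc 0 (max b (a/m)) := ⟨by linarith, le_max_left _ _⟩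
    have ham : a/m ∈ Set.Icc 0 (max b (a/m)) :=
      ⟨div_nonneg ha hm.1.le, le_max_right _ _⟩
    have hc := hf b hb0 (a/m) ham t ht
    simp only at hc
    have harg : t*b + m*(1-t)*(a/m) = φ t := by
      rw [hφ]; field_simp; ring
    rw [harg] at hc
    exact mul_le_mul_of_nonneg_left hc (w_nonneg ht)
  have hRval : (∫ t in (0:ℝ)..1, t^p * (1-t)^q * (t^α * B₁ + m * (1 - t^α) * B₂)) = D := by
    have congrEq : ∀ t ∈ Set.uIcc (0:ℝ) 1,
        t^p * (1-t)^q * (t^α * B₁ + m * (1 - t^α) * B₂)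
          = B₁ * (t^(p+α) * (1-t)^q) + (m*B₂) * (t^p * (1-t)^q)
              - (m*B₂) * (t^(p+α) * (1-t)^q) := by
      intro t ht
      rw [hI01] at ht
      rw [Real.rpow_add' ht.1 (ne_of_gt (by linarith [hα.1]))]
      ring
    rw [intervalIntegral.integral_congr congrEq]
    rw [intervalIntegral.integral_sub
        (((int_w (by linarith [hα.1] : (0:ℝ) ≤ p + α) hq.le).const_mul B₁).add ((int_w hp.le hq.le).const_mul (m*B₂)))
        ((int_w (by linarith [hα.1] : (0:ℝ) ≤ p + α) hq.le).const_mul (m*B₂)),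
      intervalIntegral.integral_add
        ((int_w (by linarith [hα.1] : (0:ℝ) ≤ p + α) hq.le).const_mul B₁) ((int_w hp.le hq.le).const_mul (m*B₂)),
      intervalIntegral.integral_const_mul, intervalIntegral.integral_const_mul,
      intervalIntegral.integral_const_mul]
    rw [hD, beta_eval (p+α) q, beta_eval p q]
    ring
  have hK0 : 0 ≤ K := by
    apply intervalIntegral.integral_nonneg zero_le_one
    intro t ht
    exact mul_nonneg (w_nonneg ht) (Real.rpow_nonneg (abs_nonneg _) _)
  have hKD : K ≤ D := by rw [← hRval]; exact hKle
  have hD0 : 0 ≤ D := hK0.trans hKD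
  have hβ1 : 0 ≤ beta (p+1) (q+1) := by
    rw [beta_eval]
    exact intervalIntegral.integral_nonneg zero_le_one (fun t ht => w_nonneg ht)
  -- rewrite RHS of goal
  have hgoalD : beta (q+1) (p+α+1) * B₁ + m * (beta (q+1) (p+1) - beta (q+1) (p+α+1)) * B₂
      = D := by
    rw [beta_symm (q+1) (p+α+1), beta_symm (q+1) (p+1)]
  rw [hgoalD]
  show ∫ x in a..b, W x * f x ≤ X * (beta (p+1) (q+1))^((l-1)/l) * D^(1/l)
  rcases eq_or_lt_of_le hl with hl1 | hl1
  · -- l = 1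
    subst hl1
    simp only [sub_self, zero_div, Real.rpow_zero, mul_one, one_div_one, Real.rpow_one]
    have : ∫ x in a..b, W x * |f x| = ∫ x in a..b, W x * |f x| ^ (1:ℝ) := by
      apply intervalIntegral.integral_congr
      intro x _
      simp [Real.rpow_one]
    calc ∫ x in a..b, W x * f x ≤ ∫ x in a..b, W x * |f x| := stepA
      _ = X * K := by rw [this, hJ]
      _ ≤ X * D := by
          apply mul_le_mul_of_nonneg_left hKD hX0
  · -- l > 1
    have holder := holder_interval hab hl1 hWc hWnn habs (fun x => abs_nonneg (f x))
    have hchain : ∫ x in a..b, W x * f x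
        ≤ (X * beta (p+1) (q+1))^((l-1)/l) * (X * K)^(1/l) := by
      calc ∫ x in a..b, W x * f x ≤ ∫ x in a..b, W x * |f x| := stepA
        _ ≤ (∫ x in a..b, W x)^((l-1)/l) * (∫ x in a..b, W x * |f x| ^ l)^(1/l) := holder
        _ = (X * beta (p+1) (q+1))^((l-1)/l) * (X * K)^(1/l) := by rw [hA, hJ]
    have hstep2 : (X * beta (p+1) (q+1))^((l-1)/l) * (X * K)^(1/l)
        ≤ (X * beta (p+1) (q+1))^((l-1)/l) * (X * D)^(1/l) := by
      apply mul_le_mul_of_nonneg_left _ (Real.rpow_nonneg (mul_nonneg hX0 hβ1) _)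
      exact Real.rpow_le_rpow (mul_nonneg hX0 hK0)
        (mul_le_mul_of_nonneg_left hKD hX0) (by positivity)
    have halg : (X * beta (p+1) (q+1))^((l-1)/l) * (X * D)^(1/l)
        = X * (beta (p+1) (q+1))^((l-1)/l) * D^(1/l) := by
      rw [Real.mul_rpow hX0 hβ1, Real.mul_rpow hX0 hD0]
      have : X ^ ((l-1)/l) * X ^ (1/l) = X := by
        rw [← Real.rpow_add' hX0 (by rw [show (l-1)/l + 1/l = 1 by field_simp; ring]; norm_num),
          show (l-1)/l + 1/l = 1 by field_simp; ring, Real.rpow_one]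
      calc X ^ ((l-1)/l) * (beta (p+1) (q+1))^((l-1)/l) * (X ^ (1/l) * D^(1/l))
          = (X ^ ((l-1)/l) * X ^ (1/l)) * ((beta (p+1) (q+1))^((l-1)/l) * D^(1/l)) := by ring
        _ = X * (beta (p+1) (q+1))^((l-1)/l) * D^(1/l) := by rw [this]; ring
    linarith [hchain, hstep2, halg.le, halg.ge]
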